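/- (Stability) Under the Parseval condition Σ_{j=0}^J |γ_j(r)|² = 1 for all r, for any f, f' ∈ L²(G): Σ_{m=0}^∞ Σ_{p∈{1,…,J}^m} ‖S[p]f − S[p]f'‖² ≤ ‖f − f'‖². -/

import Mathlib

open scoped BigOperators
open MeasureTheory

noncomputable def conv {G : Type*} [Group G] [Fintype G] (f g : G → ℂ) : G → ℂ :=
  fun x => (Fintype.card G : ℂ)⁻¹ * ∑ y, f y * g (y⁻¹ * x)

noncomputable def nsq {G : Type*} [Fintype G] (f : G → ℂ) : ℝ :=
  (Fintype.card G : ℝ)⁻¹ * ∑ x, Complex.normSq (f x)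

noncomputable def ip {G : Type*} [Fintype G] (f g : G → ℂ) : ℂ :=
  (Fintype.card G : ℂ)⁻¹ * ∑ x, f x * (starRingEnd ℂ) (g x)

noncomputable def gwavelet {G : Type*} [Group G] {k : ℕ} (d : Fin k → ℕ)
    (π : (r : Fin k) → G →* Matrix (Fin (d r)) (Fin (d r)) ℂ)
    (γ : Fin k → ℂ) : G → ℂ :=
  fun x => ∑ r, (d r : ℂ) * γ r * Matrix.trace (π r x)

noncomputable def Upath {G : Type*} [Group G] [Fintype G] {J : ℕ}
    (ψ : Fin J → G → ℂ) : List (Fin J) → (G → ℂ) → G → ℂ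
  | [], f => f
  | j :: p, f => Upath ψ p fun x => ((‖conv (ψ j) f x‖ : ℝ) : ℂ)

noncomputable def Sop {G : Type*} [Group G] [Fintype G] {k J : ℕ} (d : Fin k → ℕ)
    (π : (r : Fin k) → G →* Matrix (Fin (d r)) (Fin (d r)) ℂ)
    (γ : Fin (J + 1) → Fin k → ℂ) (p : List (Fin J)) (f : G → ℂ) : G → ℂ :=
  conv (gwavelet d π (γ 0)) (Upath (fun j => gwavelet d π (γ j.succ)) p f)

section Aux
variable {G : Type*} [Group G] [Fintype G]

lemma sumShift (y : G) (F : G → ℂ) : ∑ z : G, F z = ∑ w : G, F (y⁻¹ * w) :=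
  (Equiv.sum_comp (Equiv.mulLeft y⁻¹) F).symm

lemma sumInv (F : G → ℂ) : ∑ z : G, F z = ∑ w : G, F w⁻¹ :=
  (Equiv.sum_comp (Equiv.inv G) F).symm

lemma conv_sub (a b c : G → ℂ) :
    (fun x => conv a b x - conv a c x) = conv a (fun y => b y - c y) := by
  funext x
  simp only [conv, ← Finset.sum_sub_distrib, ← mul_sub]

lemma conv_assoc (a b c : G → ℂ) : conv a (conv b c) = conv (conv a b) c := by
  funext x
  unfold conv
  simp only [Finset.mul_sum, Finset.sum_mul]
  rw [Finset.sum_congr rfl fun y _ => sumShift y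
    (fun z => (Fintype.card G : ℂ)⁻¹ * (a y * ((Fintype.card G : ℂ)⁻¹ * (b z * c (z⁻¹ * (y⁻¹ * x))))))]
  rw [Finset.sum_comm]
  refine Finset.sum_congr rfl fun w _ => Finset.sum_congr rfl fun y _ => ?_
  have h1 : (y⁻¹ * w)⁻¹ * (y⁻¹ * x) = w⁻¹ * x := by group
  have h2 : y⁻¹ * w = y⁻¹ * w := rfl
  rw [h1]
  ring

lemma ip_conv_adj (a b c : G → ℂ) :
    ip (conv a b) c = ip b (conv (fun x => (starRingEnd ℂ) (a x⁻¹)) c) := by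
  unfold ip conv
  simp only [map_mul, map_inv₀, map_sum, Complex.conj_conj, map_natCast,
    Finset.mul_sum, Finset.sum_mul]
  rw [Finset.sum_comm]
  rw [sumInv (fun y => ∑ x : G, (Fintype.card G : ℂ)⁻¹ *
      ((Fintype.card G : ℂ)⁻¹ * (a y * b (y⁻¹ * x)) * (starRingEnd ℂ) (c x)))]
  rw [Finset.sum_congr rfl fun v _ => sumShift v
      (fun x => (Fintype.card G : ℂ)⁻¹ *
      ((Fintype.card G : ℂ)⁻¹ * (a v⁻¹ * b (v⁻¹⁻¹ * x)) * (starRingEnd ℂ) (c x)))]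
  rw [Finset.sum_comm]
  refine Finset.sum_congr rfl fun u _ => Finset.sum_congr rfl fun v _ => ?_
  have h1 : v⁻¹⁻¹ * (v⁻¹ * u) = u := by group
  rw [h1]
  ring

end Aux

section Rep
variable {G : Type*} [Group G] [Fintype G] {k : ℕ} {d : Fin k → ℕ}
  {π : (r : Fin k) → G →* Matrix (Fin (d r)) (Fin (d r)) ℂ}

lemma mul_std_mul {m n : Type*} [Fintype m] [Fintype n] [DecidableEq m] [DecidableEq n]
    (A : Matrix m m ℂ) (B : Matrix n n ℂ) (i : m) (j : n) (a : m) (b : n) :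
    (A * Matrix.single i j (1:ℂ) * B) a b = A a i * B j b := by
  simp only [Matrix.mul_apply, Matrix.single, Matrix.of_apply]
  simp [ite_and, mul_ite, ite_mul, mul_zero, zero_mul, mul_one,
    Finset.sum_ite_eq, Finset.sum_ite_eq', Finset.mul_sum, Finset.sum_mul]

lemma intertwine' (r s : Fin k) (T : Matrix (Fin (d r)) (Fin (d s)) ℂ) (y : G) :
    π r y * (∑ x : G, π r x * T * π s x⁻¹) = (∑ x : G, π r x * T * π s x⁻¹) * π s y := by
  rw [Matrix.mul_sum, Matrix.sum_mul]
  refine Fintype.sum_equiv (Equiv.mulLeft y) _ _ ?_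
  intro x
  simp only [Equiv.coe_mulLeft, map_mul, Matrix.mul_assoc]
  have hs : π s (y * x)⁻¹ * π s y = π s x⁻¹ := by
    rw [← map_mul]; congr 1; group
  rw [hs]

lemma sum_conj_ne
    (hneq : ∀ (r s : Fin k), r ≠ s → ∀ T : Matrix (Fin (d r)) (Fin (d s)) ℂ,
      (∀ x, π r x * T = T * π s x) → T = 0)
    {r s : Fin k} (hrs : r ≠ s) (T : Matrix (Fin (d r)) (Fin (d s)) ℂ) :
    (∑ x : G, π r x * T * π s x⁻¹) = 0 :=
  hneq r s hrs _ (fun y => intertwine' r s T y)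

lemma sum_conj_eq (hdpos : ∀ r, 0 < d r)
    (hirr : ∀ (r : Fin k) (M : Matrix (Fin (d r)) (Fin (d r)) ℂ),
      (∀ x, M * π r x = π r x * M) → ∃ c : ℂ, M = c • (1 : Matrix (Fin (d r)) (Fin (d r)) ℂ))
    (r : Fin k) (T : Matrix (Fin (d r)) (Fin (d r)) ℂ) :
    (∑ x : G, π r x * T * π r x⁻¹)
      = ((Fintype.card G : ℂ) * Matrix.trace T / (d r : ℂ)) • 1 := by
  obtain ⟨c, hc⟩ := hirr r (∑ x : G, π r x * T * π r x⁻¹)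
    (fun y => (intertwine' r r T y).symm)
  have htr : Matrix.trace (∑ x : G, π r x * T * π r x⁻¹)
      = (Fintype.card G : ℂ) * Matrix.trace T := by
    rw [Matrix.trace_sum]
    have h1 : ∀ x : G, Matrix.trace (π r x * T * π r x⁻¹) = Matrix.trace T := by
      intro x
      rw [Matrix.trace_mul_cycle, ← map_mul]
      simp
    simp [h1, Finset.sum_const, nsmul_eq_mul]
  have hd : ((d r : ℂ)) ≠ 0 := by
    exact_mod_cast Nat.cast_ne_zero.mpr (hdpos r).ne'
  rw [hc] at htr ⊢
  rw [Matrix.trace_smul, Matrix.trace_one] at htr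
  congr 1
  simp only [smul_eq_mul, Fintype.card_fin] at htr
  rw [← htr]
  exact (mul_div_cancel_right₀ c hd).symm

lemma ent_ne
    (hneq : ∀ (r s : Fin k), r ≠ s → ∀ T : Matrix (Fin (d r)) (Fin (d s)) ℂ,
      (∀ x, π r x * T = T * π s x) → T = 0)
    {r s : Fin k} (hrs : r ≠ s) (i i' : Fin (d r)) (j j' : Fin (d s)) :
    ∑ x : G, π r x i i' * π s x⁻¹ j j' = 0 := by
  have h := congrFun (congrFun (sum_conj_ne hneq hrs (Matrix.single i' j 1)) i) j'
  rw [Matrix.sum_apply] at h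
  simpa [mul_std_mul] using h

lemma ent_eq (hdpos : ∀ r, 0 < d r)
    (hirr : ∀ (r : Fin k) (M : Matrix (Fin (d r)) (Fin (d r)) ℂ),
      (∀ x, M * π r x = π r x * M) → ∃ c : ℂ, M = c • (1 : Matrix (Fin (d r)) (Fin (d r)) ℂ))
    (r : Fin k) (i i' j j' : Fin (d r)) :
    ∑ x : G, π r x i i' * π r x⁻¹ j j'
      = ((Fintype.card G : ℂ) / (d r : ℂ)) *
        ((if i' = j then (1:ℂ) else 0) * (if i = j' then (1:ℂ) else 0)) := by
  have h := congrFun (congrFun (sum_conj_eq hdpos hirr r (Matrix.single i' j 1)) i) j'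
  rw [Matrix.sum_apply] at h
  have htr : Matrix.trace (Matrix.single i' j (1:ℂ)) = if i' = j then 1 else 0 := by
    simp only [Matrix.trace, Matrix.diag, Matrix.single, Matrix.of_apply]
    by_cases hj : i' = j
    · subst hj; simp
    · rw [if_neg hj]
      refine Finset.sum_eq_zero fun x _ => ?_
      simp only [ite_eq_right_iff, and_imp]
      intro h1 h2; exact absurd (h1.trans h2.symm) hj
  rw [htr] at h
  simp only [mul_std_mul] at h
  rw [h, Matrix.smul_apply, Matrix.one_apply, smul_eq_mul]
  by_cases h1 : i' = j <;> by_cases h2 : i = j' <;> simp [h1, h2]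


lemma conv_char (hdpos : ∀ r, 0 < d r)
    (hirr : ∀ (r : Fin k) (M : Matrix (Fin (d r)) (Fin (d r)) ℂ),
      (∀ x, M * π r x = π r x * M) → ∃ c : ℂ, M = c • (1 : Matrix (Fin (d r)) (Fin (d r)) ℂ))
    (hneq : ∀ (r s : Fin k), r ≠ s → ∀ T : Matrix (Fin (d r)) (Fin (d s)) ℂ,
      (∀ x, π r x * T = T * π s x) → T = 0)
    (r s : Fin k) (x : G) :
    ∑ y : G, Matrix.trace (π r y) * Matrix.trace (π s (y⁻¹ * x))
      = if r = s then ((Fintype.card G : ℂ) / (d r : ℂ)) * Matrix.trace (π r x) else 0 := by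
  have step : ∀ y : G, Matrix.trace (π r y) * Matrix.trace (π s (y⁻¹ * x))
      = ∑ i, ∑ j, ∑ l, π r y i i * (π s y⁻¹ j l * π s x l j) := by
    intro y
    rw [map_mul]
    simp only [Matrix.trace, Matrix.diag, Matrix.mul_apply]
    rw [Finset.sum_mul_sum]
    exact Finset.sum_congr rfl fun i _ => Finset.sum_congr rfl fun j _ => Finset.mul_sum _ _ _
  calc ∑ y : G, Matrix.trace (π r y) * Matrix.trace (π s (y⁻¹ * x))
      = ∑ y : G, ∑ i, ∑ j, ∑ l, π r y i i * (π s y⁻¹ j l * π s x l j) :=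
        Finset.sum_congr rfl fun y _ => step y
    _ = ∑ i, ∑ j, ∑ l, ∑ y : G, π r y i i * (π s y⁻¹ j l * π s x l j) := by
        rw [Finset.sum_comm]
        exact Finset.sum_congr rfl fun i _ => by
          rw [Finset.sum_comm]
          exact Finset.sum_congr rfl fun j _ => Finset.sum_comm
    _ = ∑ i, ∑ j, ∑ l, (∑ y : G, π r y i i * π s y⁻¹ j l) * π s x l j := by
        refine Finset.sum_congr rfl fun i _ => Finset.sum_congr rfl fun j _ =>
          Finset.sum_congr rfl fun l _ => ?_
        rw [Finset.sum_mul]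
        exact Finset.sum_congr rfl fun y _ => by ring
    _ = if r = s then ((Fintype.card G : ℂ) / (d r : ℂ)) * Matrix.trace (π r x) else 0 := by
        by_cases hrs : r = s
        · subst hrs
          rw [if_pos rfl]
          simp only [ent_eq hdpos hirr r]
          simp only [ite_mul, one_mul, zero_mul, mul_ite, mul_zero, mul_one]
          simp only [Finset.sum_ite_eq, Finset.mem_univ, if_true]
          simp [Matrix.trace, Matrix.diag, Finset.mul_sum]
        · rw [if_neg hrs]
          refine Finset.sum_eq_zero fun i _ => Finset.sum_eq_zero fun j _ =>
            Finset.sum_eq_zero fun l _ => ?_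
          rw [ent_ne hneq hrs, zero_mul]

lemma char_one (r : Fin k) : Matrix.trace (π r 1) = (d r : ℂ) := by
  rw [map_one, Matrix.trace_one]
  simp

lemma ip_char (hdpos : ∀ r, 0 < d r)
    (hirr : ∀ (r : Fin k) (M : Matrix (Fin (d r)) (Fin (d r)) ℂ),
      (∀ x, M * π r x = π r x * M) → ∃ c : ℂ, M = c • (1 : Matrix (Fin (d r)) (Fin (d r)) ℂ))
    (hneq : ∀ (r s : Fin k), r ≠ s → ∀ T : Matrix (Fin (d r)) (Fin (d s)) ℂ,
      (∀ x, π r x * T = T * π s x) → T = 0)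
    (r s : Fin k) :
    ∑ y : G, Matrix.trace (π r y) * Matrix.trace (π s y⁻¹)
      = if r = s then (Fintype.card G : ℂ) else 0 := by
  have h := conv_char hdpos hirr hneq r s 1
  simp only [mul_one] at h
  rw [h]
  by_cases hrs : r = s
  · subst hrs
    rw [if_pos rfl, if_pos rfl, char_one]
    have hd : ((d r : ℂ)) ≠ 0 := by
      exact_mod_cast Nat.cast_ne_zero.mpr (hdpos r).ne'
    field_simp
  · rw [if_neg hrs, if_neg hrs]

lemma pair_sum (hdpos : ∀ r, 0 < d r)
    (hirr : ∀ (r : Fin k) (M : Matrix (Fin (d r)) (Fin (d r)) ℂ),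
      (∀ x, M * π r x = π r x * M) → ∃ c : ℂ, M = c • (1 : Matrix (Fin (d r)) (Fin (d r)) ℂ))
    (hneq : ∀ (r s : Fin k), r ≠ s → ∀ T : Matrix (Fin (d r)) (Fin (d s)) ℂ,
      (∀ x, π r x * T = T * π s x) → T = 0)
    (g : Fin k → ℂ) (s : Fin k) :
    ∑ z : G, (∑ r, g r * Matrix.trace (π r z)) * Matrix.trace (π s z⁻¹)
      = g s * (Fintype.card G : ℂ) := by
  simp only [Finset.sum_mul]
  rw [Finset.sum_comm]
  have : ∀ r : Fin k, ∑ z : G, g r * Matrix.trace (π r z) * Matrix.trace (π s z⁻¹)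
      = g r * (if r = s then (Fintype.card G : ℂ) else 0) := by
    intro r
    rw [← ip_char hdpos hirr hneq r s, Finset.mul_sum]
    exact Finset.sum_congr rfl fun z _ => by ring
  rw [Finset.sum_congr rfl fun r _ => this r]
  simp

open Classical in
lemma complete (hdpos : ∀ r, 0 < d r)
    (hirr : ∀ (r : Fin k) (M : Matrix (Fin (d r)) (Fin (d r)) ℂ),
      (∀ x, M * π r x = π r x * M) → ∃ c : ℂ, M = c • (1 : Matrix (Fin (d r)) (Fin (d r)) ℂ))
    (hneq : ∀ (r s : Fin k), r ≠ s → ∀ T : Matrix (Fin (d r)) (Fin (d s)) ℂ,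
      (∀ x, π r x * T = T * π s x) → T = 0)
    (hcard : Nat.card (ConjClasses G) = k) (x : G) :
    ∑ r, (d r : ℂ) * Matrix.trace (π r x)
      = if x = 1 then (Fintype.card G : ℂ) else 0 := by
  classical
  have hN : (Fintype.card G : ℂ) ≠ 0 := by
    exact_mod_cast Nat.cast_ne_zero.mpr Fintype.card_ne_zero
  letI : Fintype (ConjClasses G) := Fintype.ofFinite _
  have hconj : ∀ (r : Fin k) (a b : G), IsConj a b
      → Matrix.trace (π r a) = Matrix.trace (π r b) := by
    intro r a b hab
    obtain ⟨c, hc⟩ := isConj_iff.mp hab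
    rw [← hc, map_mul, map_mul, Matrix.trace_mul_cycle, ← map_mul, ← map_mul]
    congr 2
    group
  let χt : Fin k → (ConjClasses G → ℂ) := fun r =>
    Quotient.lift (fun g => Matrix.trace (π r g)) (fun a b hab => hconj r a b hab)
  have hχt : ∀ (r : Fin k) (g : G), χt r (ConjClasses.mk g) = Matrix.trace (π r g) :=
    fun r g => rfl
  have hli : LinearIndependent ℂ χt := by
    rw [Fintype.linearIndependent_iff]
    intro g hg s
    have h0 : ∀ z : G, ∑ r, g r * Matrix.trace (π r z) = 0 := by
      intro z
      have := congrFun hg (ConjClasses.mk z)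
      simpa [Finset.sum_apply, hχt] using this
    have h1 : ∑ z : G, (∑ r, g r * Matrix.trace (π r z)) * Matrix.trace (π s z⁻¹) = 0 := by
      simp [h0]
    rw [pair_sum hdpos hirr hneq] at h1
    exact (mul_eq_zero.mp h1).resolve_right hN
  have hcardk : Fintype.card (Fin k) = Module.finrank ℂ (ConjClasses G → ℂ) := by
    rw [Module.finrank_fintype_fun_eq_card, Fintype.card_fin]
    rw [← hcard, Nat.card_eq_fintype_card]
  have hsp := hli.span_eq_top_of_card_eq_finrank' hcardk
  have hδ : (fun o : ConjClasses G => if o = ConjClasses.mk (1:G) then (1:ℂ) else 0)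
      ∈ Submodule.span ℂ (Set.range χt) := by
    rw [hsp]; exact Submodule.mem_top
  rw [Submodule.mem_span_range_iff_exists_fun] at hδ
  obtain ⟨c, hc⟩ := hδ
  have hval : ∀ z : G, ∑ r, c r * Matrix.trace (π r z) = if z = 1 then 1 else 0 := by
    intro z
    have h2 := congrFun hc (ConjClasses.mk z)
    simp only [Finset.sum_apply, Pi.smul_apply, smul_eq_mul, hχt] at h2
    rw [h2]
    by_cases hz : z = 1
    · subst hz; simp
    · rw [if_neg hz, if_neg (fun h => hz (isConj_one_left.mp (ConjClasses.mk_eq_mk_iff_isConj.mp h)))]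
  have hcs : ∀ s : Fin k, c s * (Fintype.card G : ℂ) = (d s : ℂ) := by
    intro s
    rw [← pair_sum hdpos hirr hneq c s]
    rw [Finset.sum_congr rfl fun z _ => by rw [hval z]]
    simp only [ite_mul, one_mul, zero_mul]
    rw [Finset.sum_ite_eq' Finset.univ (1:G) (fun z => Matrix.trace (π s z⁻¹))]
    simp [char_one]
  calc ∑ r, (d r : ℂ) * Matrix.trace (π r x)
      = ∑ r, (c r * (Fintype.card G : ℂ)) * Matrix.trace (π r x) := by
        refine Finset.sum_congr rfl fun r _ => by rw [hcs r]
    _ = (Fintype.card G : ℂ) * ∑ r, c r * Matrix.trace (π r x) := by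
        rw [Finset.mul_sum]
        exact Finset.sum_congr rfl fun r _ => by ring
    _ = if x = 1 then (Fintype.card G : ℂ) else 0 := by
        rw [hval x]
        by_cases hx : x = 1 <;> simp [hx]

end Rep

section Par
variable {G : Type*} [Group G] [Fintype G] {k : ℕ} {d : Fin k → ℕ}
  {π : (r : Fin k) → G →* Matrix (Fin (d r)) (Fin (d r)) ℂ}


lemma char_conj (hunit : ∀ r x, π r x ∈ Matrix.unitaryGroup (Fin (d r)) ℂ)
    (r : Fin k) (x : G) :
    (starRingEnd ℂ) (Matrix.trace (π r x)) = Matrix.trace (π r x⁻¹) := by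
  have h1 : π r x⁻¹ = (π r x).conjTranspose := by
    have h2 : (π r x).conjTranspose * π r x = 1 := (hunit r x).1
    have h3 : π r x * π r x⁻¹ = 1 := by rw [← map_mul]; simp
    calc π r x⁻¹ = 1 * π r x⁻¹ := (one_mul _).symm
      _ = (π r x).conjTranspose * (π r x * π r x⁻¹) := by rw [← h2, Matrix.mul_assoc]
      _ = (π r x).conjTranspose := by rw [h3, mul_one]
  rw [h1, Matrix.trace_conjTranspose]
  rfl

lemma gwavelet_conv (hdpos : ∀ r, 0 < d r)
    (hirr : ∀ (r : Fin k) (M : Matrix (Fin (d r)) (Fin (d r)) ℂ),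
      (∀ x, M * π r x = π r x * M) → ∃ c : ℂ, M = c • (1 : Matrix (Fin (d r)) (Fin (d r)) ℂ))
    (hneq : ∀ (r s : Fin k), r ≠ s → ∀ T : Matrix (Fin (d r)) (Fin (d s)) ℂ,
      (∀ x, π r x * T = T * π s x) → T = 0)
    (γa γb : Fin k → ℂ) :
    conv (gwavelet d π γa) (gwavelet d π γb) = gwavelet d π (fun r => γa r * γb r) := by
  have hN : (Fintype.card G : ℂ) ≠ 0 := by
    exact_mod_cast Nat.cast_ne_zero.mpr Fintype.card_ne_zero
  funext x
  unfold conv gwavelet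
  have step : ∀ y : G,
      (∑ r, (d r : ℂ) * γa r * Matrix.trace (π r y)) *
        (∑ s, (d s : ℂ) * γb s * Matrix.trace (π s (y⁻¹ * x)))
      = ∑ r, ∑ s, ((d r : ℂ) * γa r * (d s : ℂ) * γb s) *
          (Matrix.trace (π r y) * Matrix.trace (π s (y⁻¹ * x))) := by
    intro y
    rw [Finset.sum_mul_sum]
    exact Finset.sum_congr rfl fun r _ => Finset.sum_congr rfl fun s _ => by ring
  rw [Finset.sum_congr rfl fun y (_ : y ∈ Finset.univ) => step y]
  rw [Finset.sum_comm]
  have swap2 : ∀ r : Fin k, ∑ y : G, ∑ s, ((d r : ℂ) * γa r * (d s : ℂ) * γb s) *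
          (Matrix.trace (π r y) * Matrix.trace (π s (y⁻¹ * x)))
      = ∑ s, ((d r : ℂ) * γa r * (d s : ℂ) * γb s) *
          ∑ y : G, Matrix.trace (π r y) * Matrix.trace (π s (y⁻¹ * x)) := by
    intro r
    rw [Finset.sum_comm]
    exact Finset.sum_congr rfl fun s _ => by rw [Finset.mul_sum]
  rw [Finset.sum_congr rfl fun r (_ : r ∈ Finset.univ) => swap2 r]
  have inner : ∀ r : Fin k, ∑ s, ((d r : ℂ) * γa r * (d s : ℂ) * γb s) *
          ∑ y : G, Matrix.trace (π r y) * Matrix.trace (π s (y⁻¹ * x))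
      = (Fintype.card G : ℂ) * ((d r : ℂ) * (γa r * γb r) * Matrix.trace (π r x)) := by
    intro r
    rw [Finset.sum_congr rfl fun s (_ : s ∈ Finset.univ) => by
      rw [conv_char hdpos hirr hneq r s x]]
    rw [Finset.sum_eq_single r]
    · rw [if_pos rfl]
      have hd : ((d r : ℂ)) ≠ 0 := by
        exact_mod_cast Nat.cast_ne_zero.mpr (hdpos r).ne'
      field_simp
    · intro s _ hs
      rw [if_neg (Ne.symm hs), mul_zero]
    · simp
  rw [Finset.sum_congr rfl fun r (_ : r ∈ Finset.univ) => inner r]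
  rw [← Finset.mul_sum, ← mul_assoc, inv_mul_cancel₀ hN, one_mul]

lemma gwavelet_tilde (hunit : ∀ r x, π r x ∈ Matrix.unitaryGroup (Fin (d r)) ℂ)
    (γa : Fin k → ℂ) :
    (fun x : G => (starRingEnd ℂ) (gwavelet d π γa x⁻¹))
      = gwavelet d π (fun r => (starRingEnd ℂ) (γa r)) := by
  funext x
  unfold gwavelet
  rw [map_sum]
  refine Finset.sum_congr rfl fun r _ => ?_
  rw [map_mul, map_mul, char_conj hunit r x⁻¹, inv_inv]
  congr 1
  congr 1
  simp [Complex.conj_natCast]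

open Classical in
lemma conv_delta (hdpos : ∀ r, 0 < d r)
    (hirr : ∀ (r : Fin k) (M : Matrix (Fin (d r)) (Fin (d r)) ℂ),
      (∀ x, M * π r x = π r x * M) → ∃ c : ℂ, M = c • (1 : Matrix (Fin (d r)) (Fin (d r)) ℂ))
    (hneq : ∀ (r s : Fin k), r ≠ s → ∀ T : Matrix (Fin (d r)) (Fin (d s)) ℂ,
      (∀ x, π r x * T = T * π s x) → T = 0)
    (hcard : Nat.card (ConjClasses G) = k) (g : G → ℂ) :
    conv (gwavelet d π (fun _ => 1)) g = g := by
  have hN : (Fintype.card G : ℂ) ≠ 0 := by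
    exact_mod_cast Nat.cast_ne_zero.mpr Fintype.card_ne_zero
  funext x
  unfold conv gwavelet
  have h1 : ∀ y : G, (∑ r, (d r : ℂ) * 1 * Matrix.trace (π r y)) * g (y⁻¹ * x)
      = (if y = 1 then (Fintype.card G : ℂ) else 0) * g (y⁻¹ * x) := by
    intro y
    rw [show (∑ r, (d r : ℂ) * 1 * Matrix.trace (π r y))
        = ∑ r, (d r : ℂ) * Matrix.trace (π r y) by
      exact Finset.sum_congr rfl fun r _ => by ring]
    rw [complete hdpos hirr hneq hcard y]
  rw [Finset.sum_congr rfl fun y (_ : y ∈ Finset.univ) => h1 y]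
  simp only [ite_mul, zero_mul]
  rw [Finset.sum_ite_eq' Finset.univ (1:G) (fun y => (Fintype.card G : ℂ) * g (y⁻¹ * x))]
  simp [inv_mul_cancel₀ hN, ← mul_assoc]

end Par


section NsqBasic
variable {G : Type*} [Group G] [Fintype G]

lemma ip_self_eq (g : G → ℂ) : ip g g = ((nsq g : ℝ) : ℂ) := by
  unfold ip nsq
  push_cast
  congr 1
  exact Finset.sum_congr rfl fun x _ => (Complex.mul_conj (g x))

lemma nsq_nonneg (g : G → ℂ) : 0 ≤ nsq g := by
  unfold nsq
  apply mul_nonneg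
  · positivity
  · exact Finset.sum_nonneg fun x _ => Complex.normSq_nonneg _

lemma nsq_mono {a b : G → ℂ} (h : ∀ x, ‖a x‖ ≤ ‖b x‖) :
    nsq a ≤ nsq b := by
  unfold nsq
  apply mul_le_mul_of_nonneg_left _ (by positivity)
  refine Finset.sum_le_sum fun x _ => ?_
  rw [← Complex.sq_norm, ← Complex.sq_norm]
  exact pow_le_pow_left₀ (norm_nonneg _) (h x) 2

end NsqBasic

section Parseval
variable {G : Type*} [Group G] [Fintype G] {k : ℕ} {d : Fin k → ℕ}
  {π : (r : Fin k) → G →* Matrix (Fin (d r)) (Fin (d r)) ℂ}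

lemma ip_sum_right {ι : Type*} [Fintype ι] (g : G → ℂ) (H : ι → G → ℂ) :
    ∑ j : ι, ip g (H j) = ip g (fun x => ∑ j, H j x) := by
  unfold ip
  rw [← Finset.mul_sum]
  congr 1
  rw [Finset.sum_comm]
  refine Finset.sum_congr rfl fun x _ => ?_
  rw [map_sum, Finset.mul_sum]

lemma conv_sum_left {ι : Type*} [Fintype ι] (F : ι → G → ℂ) (g : G → ℂ) :
    conv (fun y => ∑ j : ι, F j y) g = fun x => ∑ j, conv (F j) g x := by
  funext x
  unfold conv
  rw [← Finset.mul_sum, Finset.sum_comm]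
  congr 1
  refine Finset.sum_congr rfl fun y _ => ?_
  rw [Finset.sum_mul]

lemma gwavelet_sum {ι : Type*} [Fintype ι] (c : ι → Fin k → ℂ) :
    (fun x : G => ∑ j : ι, gwavelet d π (c j) x) = gwavelet d π (fun r => ∑ j, c j r) := by
  funext x
  unfold gwavelet
  rw [Finset.sum_comm]
  refine Finset.sum_congr rfl fun r _ => ?_
  simp only [Finset.mul_sum, Finset.sum_mul]

lemma parseval_c (hdpos : ∀ r, 0 < d r)
    (hunit : ∀ r x, π r x ∈ Matrix.unitaryGroup (Fin (d r)) ℂ)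
    (hirr : ∀ (r : Fin k) (M : Matrix (Fin (d r)) (Fin (d r)) ℂ),
      (∀ x, M * π r x = π r x * M) → ∃ c : ℂ, M = c • (1 : Matrix (Fin (d r)) (Fin (d r)) ℂ))
    (hneq : ∀ (r s : Fin k), r ≠ s → ∀ T : Matrix (Fin (d r)) (Fin (d s)) ℂ,
      (∀ x, π r x * T = T * π s x) → T = 0)
    (hcard : Nat.card (ConjClasses G) = k)
    {J : ℕ} (γ : Fin (J + 1) → Fin k → ℂ)
    (hPar : ∀ r : Fin k, ∑ j : Fin (J + 1), Complex.normSq (γ j r) = 1)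
    (g : G → ℂ) :
    ∑ j : Fin (J + 1), ip (conv (gwavelet d π (γ j)) g) (conv (gwavelet d π (γ j)) g)
      = ip g g := by
  have hstep : ∀ j : Fin (J + 1), ip (conv (gwavelet d π (γ j)) g) (conv (gwavelet d π (γ j)) g)
      = ip g (conv (gwavelet d π (fun r => (starRingEnd ℂ) (γ j r) * γ j r)) g) := by
    intro j
    rw [ip_conv_adj, gwavelet_tilde hunit (γ j), conv_assoc,
      gwavelet_conv hdpos hirr hneq]
  rw [Finset.sum_congr rfl fun j _ => hstep j]
  rw [ip_sum_right]
  rw [show (fun x => ∑ j : Fin (J+1),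
        conv (gwavelet d π (fun r => (starRingEnd ℂ) (γ j r) * γ j r)) g x)
      = conv (gwavelet d π (fun r => ∑ j : Fin (J+1), (starRingEnd ℂ) (γ j r) * γ j r)) g by
    rw [← gwavelet_sum, ← conv_sum_left]]
  rw [show (fun r => ∑ j : Fin (J+1), (starRingEnd ℂ) (γ j r) * γ j r)
      = (fun _ : Fin k => (1:ℂ)) by
    funext r
    have : ∀ j : Fin (J+1), (starRingEnd ℂ) (γ j r) * γ j r
        = ((Complex.normSq (γ j r) : ℝ) : ℂ) := by
      intro j
      rw [← Complex.normSq_eq_conj_mul_self]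
    rw [Finset.sum_congr rfl fun j _ => this j, ← Complex.ofReal_sum, hPar r,
      Complex.ofReal_one]]
  rw [conv_delta hdpos hirr hneq hcard]

lemma parseval (hdpos : ∀ r, 0 < d r)
    (hunit : ∀ r x, π r x ∈ Matrix.unitaryGroup (Fin (d r)) ℂ)
    (hirr : ∀ (r : Fin k) (M : Matrix (Fin (d r)) (Fin (d r)) ℂ),
      (∀ x, M * π r x = π r x * M) → ∃ c : ℂ, M = c • (1 : Matrix (Fin (d r)) (Fin (d r)) ℂ))
    (hneq : ∀ (r s : Fin k), r ≠ s → ∀ T : Matrix (Fin (d r)) (Fin (d s)) ℂ,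
      (∀ x, π r x * T = T * π s x) → T = 0)
    (hcard : Nat.card (ConjClasses G) = k)
    {J : ℕ} (γ : Fin (J + 1) → Fin k → ℂ)
    (hPar : ∀ r : Fin k, ∑ j : Fin (J + 1), Complex.normSq (γ j r) = 1)
    (g : G → ℂ) :
    ∑ j : Fin (J + 1), nsq (conv (gwavelet d π (γ j)) g) = nsq g := by
  have h := parseval_c hdpos hunit hirr hneq hcard γ hPar g
  rw [ip_self_eq] at h
  rw [Finset.sum_congr rfl fun j (_ : j ∈ Finset.univ) => ip_self_eq _] at h
  rw [← Complex.ofReal_sum] at h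
  exact_mod_cast h

end Parseval

section Scatter
variable {G : Type*} [Group G] [Fintype G]

lemma abs_step (z w : ℂ) :
    ‖(((‖z‖ : ℝ) : ℂ) - ((‖w‖ : ℝ) : ℂ))‖
      ≤ ‖z - w‖ := by
  rw [← Complex.ofReal_sub, Complex.norm_real, Real.norm_eq_abs]
  exact abs_norm_sub_norm_le z w

lemma scatter {J : ℕ} (φ : G → ℂ) (ψ : Fin J → G → ℂ)
    (hpar : ∀ g : G → ℂ, nsq (conv φ g) + ∑ j : Fin J, nsq (conv (ψ j) g) = nsq g) :
    ∀ (M : ℕ) (g g' : G → ℂ),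
      ∑ m ∈ Finset.range M, ∑ p : Fin m → Fin J,
        nsq (conv φ (fun y => Upath ψ (List.ofFn p) g y - Upath ψ (List.ofFn p) g' y))
      ≤ nsq (fun x => g x - g' x) := by
  intro M
  induction M with
  | zero =>
    intro g g'
    simp only [Finset.range_zero, Finset.sum_empty]
    exact nsq_nonneg _
  | succ M IH =>
    intro g g'
    rw [Finset.sum_range_succ']
    have hf0 : (∑ p : Fin 0 → Fin J,
        nsq (conv φ (fun y => Upath ψ (List.ofFn p) g y - Upath ψ (List.ofFn p) g' y)))
        = nsq (conv φ (fun y => g y - g' y)) := by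
      rw [Finset.sum_congr rfl fun p (_ : p ∈ Finset.univ) => by rw [List.ofFn_zero]]
      rw [show Upath ψ [] g = g from rfl, show Upath ψ [] g' = g' from rfl]
      rw [Finset.sum_const, Finset.card_univ]
      simp
    have hsucc : ∀ m : ℕ, (∑ p : Fin (m+1) → Fin J,
        nsq (conv φ (fun y => Upath ψ (List.ofFn p) g y - Upath ψ (List.ofFn p) g' y)))
        = ∑ j : Fin J, ∑ q : Fin m → Fin J,
          nsq (conv φ (fun y =>
            Upath ψ (List.ofFn q) (fun x => ((‖conv (ψ j) g x‖ : ℝ) : ℂ)) y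
            - Upath ψ (List.ofFn q) (fun x => ((‖conv (ψ j) g' x‖ : ℝ) : ℂ)) y)) := by
      intro m
      rw [← Equiv.sum_comp (Fin.consEquiv (fun _ : Fin (m+1) => Fin J))
        (fun p : Fin (m+1) → Fin J =>
          nsq (conv φ (fun y => Upath ψ (List.ofFn p) g y - Upath ψ (List.ofFn p) g' y)))]
      rw [Fintype.sum_prod_type]
      refine Finset.sum_congr rfl fun j _ => Finset.sum_congr rfl fun q _ => ?_
      have hofn : List.ofFn (Fin.consEquiv (fun _ : Fin (m+1) => Fin J) (j, q))
          = j :: List.ofFn q := by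
        simp [Fin.consEquiv, List.ofFn_succ]
      rw [hofn]
      rfl
    rw [hf0, Finset.sum_congr rfl fun m _ => hsucc m, Finset.sum_comm]
    have hbound : ∀ j : Fin J,
        (∑ m ∈ Finset.range M, ∑ q : Fin m → Fin J,
          nsq (conv φ (fun y =>
            Upath ψ (List.ofFn q) (fun x => ((‖conv (ψ j) g x‖ : ℝ) : ℂ)) y
            - Upath ψ (List.ofFn q) (fun x => ((‖conv (ψ j) g' x‖ : ℝ) : ℂ)) y)))
        ≤ nsq (conv (ψ j) (fun y => g y - g' y)) := by
      intro j
      refine le_trans (IH _ _) ?_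
      refine nsq_mono fun x => ?_
      have := abs_step (conv (ψ j) g x) (conv (ψ j) g' x)
      refine le_trans this (le_of_eq ?_)
      congr 1
      exact congrFun (conv_sub (ψ j) g g') x
    calc (∑ j : Fin J, ∑ m ∈ Finset.range M, ∑ q : Fin m → Fin J,
          nsq (conv φ (fun y =>
            Upath ψ (List.ofFn q) (fun x => ((‖conv (ψ j) g x‖ : ℝ) : ℂ)) y
            - Upath ψ (List.ofFn q) (fun x => ((‖conv (ψ j) g' x‖ : ℝ) : ℂ)) y)))
          + nsq (conv φ (fun y => g y - g' y))
        ≤ (∑ j : Fin J, nsq (conv (ψ j) (fun y => g y - g' y)))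
            + nsq (conv φ (fun y => g y - g' y)) := by
          exact add_le_add_left (Finset.sum_le_sum fun j _ => hbound j) _
      _ = nsq (fun x => g x - g' x) := by
          rw [add_comm]
          exact hpar (fun y => g y - g' y)

end Scatter

theorem stmt11 {G : Type*} [Group G] [Fintype G]
    {k : ℕ} (d : Fin k → ℕ) (hdpos : ∀ r, 0 < d r)
    (π : (r : Fin k) → G →* Matrix (Fin (d r)) (Fin (d r)) ℂ)
    (hunit : ∀ r x, π r x ∈ Matrix.unitaryGroup (Fin (d r)) ℂ)
    (hirr : ∀ (r : Fin k) (M : Matrix (Fin (d r)) (Fin (d r)) ℂ),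
      (∀ x, M * π r x = π r x * M) → ∃ c : ℂ, M = c • (1 : Matrix (Fin (d r)) (Fin (d r)) ℂ))
    (hneq : ∀ (r s : Fin k), r ≠ s → ∀ T : Matrix (Fin (d r)) (Fin (d s)) ℂ,
      (∀ x, π r x * T = T * π s x) → T = 0)
    (hcard : Nat.card (ConjClasses G) = k)
    {J : ℕ} (γ : Fin (J + 1) → Fin k → ℂ)
    (hPar : ∀ r : Fin k, ∑ j : Fin (J + 1), Complex.normSq (γ j r) = 1)
    (f f' : G → ℂ) :
    ∑' m : ℕ, ∑ p : Fin m → Fin J,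
        nsq (fun x => Sop d π γ (List.ofFn p) f x - Sop d π γ (List.ofFn p) f' x)
      ≤ nsq (fun x => f x - f' x) := by
  have hpar : ∀ g : G → ℂ,
      nsq (conv (gwavelet d π (γ 0)) g)
        + ∑ j : Fin J, nsq (conv (gwavelet d π (γ j.succ)) g) = nsq g := by
    intro g
    have h := parseval hdpos hunit hirr hneq hcard γ hPar g
    rw [← h, Fin.sum_univ_succ]
  apply Real.tsum_le_of_sum_range_le
  · intro n
    exact Finset.sum_nonneg fun p _ => nsq_nonneg _
  · intro n
    refine le_trans (le_of_eq ?_)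
      (scatter (gwavelet d π (γ 0)) (fun j => gwavelet d π (γ j.succ)) hpar n f f')
    refine Finset.sum_congr rfl fun m _ => Finset.sum_congr rfl fun p _ => ?_
    simp only [Sop]
    rw [conv_sub]
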